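/- For regularized logistic regression J(w, D) = (1/n) Σ_{i=1}^n log(1 + exp(-X_iᵀ w t_i)) + (λ/2)‖w‖₂² with covariates in [0,1]^d and labels in {-1,1}: if w₁ minimizes J(·, D) and w₂ minimizes J(·, D') for two datasets D, D' of size n differing in one sample, then ‖w₁ - w₂‖₁ ≤ 2d/(nλ). In other words, the L1-sensitivity of the trained weight vector is at most 2d/(nλ). -/

import Mathlib

open Finset

/-- Regularized logistic-regression loss
`J(w, D) = (1/n) Σᵢ log(1 + exp(-Xᵢᵀ w tᵢ)) + (λ/2)‖w‖₂²`. -/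
noncomputable def logRegLoss {n d : ℕ} (lam : ℝ) (X : Fin n → Fin d → ℝ)
    (t : Fin n → ℝ) (w : Fin d → ℝ) : ℝ :=
  (1 / n) * ∑ i, Real.log (1 + Real.exp (-(∑ j, X i j * w j) * t i)) +
    lam / 2 * ∑ j, (w j) ^ 2

namespace Stmt7Aux

/-- log-sum-exp of `0` and `x`. -/
noncomputable def lse (x : ℝ) : ℝ := Real.log (1 + Real.exp x)

lemma one_add_exp_pos (x : ℝ) : 0 < 1 + Real.exp x := by positivity

lemma hasDerivAt_lse (x : ℝ) :
    HasDerivAt lse (Real.exp x / (1 + Real.exp x)) x := by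
  have h : HasDerivAt (fun y : ℝ => 1 + Real.exp y) (Real.exp x) x :=
    (Real.hasDerivAt_exp x).const_add 1
  exact h.log (ne_of_gt (one_add_exp_pos x))

lemma deriv_lse : deriv lse = fun x => Real.exp x / (1 + Real.exp x) :=
  funext fun x => (hasDerivAt_lse x).deriv

lemma convexOn_lse : ConvexOn ℝ Set.univ lse := by
  have hd2 : ∀ x : ℝ, HasDerivAt (deriv lse)
      ((Real.exp x * (1 + Real.exp x) - Real.exp x * Real.exp x) / (1 + Real.exp x) ^ 2) x := by
    intro x
    rw [deriv_lse]
    exact (Real.hasDerivAt_exp x).div ((Real.hasDerivAt_exp x).const_add 1)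
      (ne_of_gt (one_add_exp_pos x))
  apply convexOn_univ_of_deriv2_nonneg
  · exact fun x => (hasDerivAt_lse x).differentiableAt
  · exact fun x => (hd2 x).differentiableAt
  · intro x
    have : deriv^[2] lse x = deriv (deriv lse) x := by
      simp [Function.iterate_succ, Function.comp]
    rw [this, (hd2 x).deriv]
    have hnum : Real.exp x * (1 + Real.exp x) - Real.exp x * Real.exp x = Real.exp x := by ring
    rw [hnum]
    have h1 : (0:ℝ) < 1 + Real.exp x := one_add_exp_pos x
    positivity

/-- `lse` is 1-Lipschitz. -/
lemma lse_sub_le (a b : ℝ) : lse a - lse b ≤ |a - b| := by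
  rcases le_total a b with h | h
  · have hm : lse a ≤ lse b := by
      have := Real.exp_le_exp.2 h
      unfold lse
      exact Real.log_le_log (one_add_exp_pos a) (by linarith)
    have : (0:ℝ) ≤ |a - b| := abs_nonneg _
    linarith
  · have hkey : 1 + Real.exp a ≤ Real.exp (a - b) * (1 + Real.exp b) := by
      have h1 : (1:ℝ) ≤ Real.exp (a - b) := Real.one_le_exp (by linarith)
      have h2 : Real.exp (a - b) * Real.exp b = Real.exp a := by
        rw [← Real.exp_add]; ring_nf
      nlinarith [Real.exp_pos b]
    have hlog : lse a ≤ (a - b) + lse b := by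
      unfold lse
      calc Real.log (1 + Real.exp a) ≤ Real.log (Real.exp (a - b) * (1 + Real.exp b)) :=
            Real.log_le_log (one_add_exp_pos a) hkey
        _ = (a - b) + Real.log (1 + Real.exp b) := by
            rw [Real.log_mul (ne_of_gt (Real.exp_pos _)) (ne_of_gt (one_add_exp_pos b)),
              Real.log_exp]
    have : a - b ≤ |a - b| := le_abs_self _
    linarith

/-- Strong convexity of the regularized loss at a minimizer. -/
lemma strong_min {n d : ℕ} (lam : ℝ) (hlam : 0 < lam) (X : Fin n → Fin d → ℝ)
    (t : Fin n → ℝ) (w₀ w : Fin d → ℝ)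
    (hmin : ∀ v, logRegLoss lam X t w₀ ≤ logRegLoss lam X t v) :
    lam / 2 * ∑ j, (w j - w₀ j) ^ 2 ≤
      logRegLoss lam X t w - logRegLoss lam X t w₀ := by
  set S : ℝ := ∑ j, (w j - w₀ j) ^ 2 with hS
  set D : ℝ := logRegLoss lam X t w - logRegLoss lam X t w₀ with hD
  have hSnn : 0 ≤ S := Finset.sum_nonneg fun j _ => sq_nonneg _
  have key : ∀ τ : ℝ, 0 < τ → τ < 1 → lam / 2 * ((1 - τ) * S) ≤ D := by
    intro τ hτ0 hτ1
    set v : Fin d → ℝ := fun j => (1 - τ) * w₀ j + τ * w j with hv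
    -- convexity of the logistic part
    have hlog : ∀ i : Fin n,
        Real.log (1 + Real.exp (-(∑ j, X i j * v j) * t i)) ≤
          (1 - τ) * Real.log (1 + Real.exp (-(∑ j, X i j * w₀ j) * t i)) +
            τ * Real.log (1 + Real.exp (-(∑ j, X i j * w j) * t i)) := by
      intro i
      have harg : -(∑ j, X i j * v j) * t i =
          (1 - τ) * (-(∑ j, X i j * w₀ j) * t i) + τ * (-(∑ j, X i j * w j) * t i) := by
        have : ∑ j, X i j * v j =
            (1 - τ) * ∑ j, X i j * w₀ j + τ * ∑ j, X i j * w j := by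
          rw [Finset.mul_sum, Finset.mul_sum, ← Finset.sum_add_distrib]
          exact Finset.sum_congr rfl fun j _ => by simp [hv]; ring
        rw [this]; ring
      have := convexOn_lse.2 (Set.mem_univ (-(∑ j, X i j * w₀ j) * t i))
        (Set.mem_univ (-(∑ j, X i j * w j) * t i)) (by linarith : (0:ℝ) ≤ 1 - τ)
        (le_of_lt hτ0) (by ring)
      simpa [lse, smul_eq_mul, harg] using this
    have hsumlog : ∑ i, Real.log (1 + Real.exp (-(∑ j, X i j * v j) * t i)) ≤
        (1 - τ) * ∑ i, Real.log (1 + Real.exp (-(∑ j, X i j * w₀ j) * t i)) +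
          τ * ∑ i, Real.log (1 + Real.exp (-(∑ j, X i j * w j) * t i)) := by
      rw [Finset.mul_sum, Finset.mul_sum, ← Finset.sum_add_distrib]
      exact Finset.sum_le_sum fun i _ => hlog i
    -- quadratic identity
    have hquad : ∑ j, (v j) ^ 2 =
        (1 - τ) * ∑ j, (w₀ j) ^ 2 + τ * ∑ j, (w j) ^ 2 - τ * (1 - τ) * S := by
      rw [hS, Finset.mul_sum, Finset.mul_sum, Finset.mul_sum, ← Finset.sum_add_distrib,
        ← Finset.sum_sub_distrib]
      exact Finset.sum_congr rfl fun j _ => by simp [hv]; ring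
    have hmono : logRegLoss lam X t w₀ ≤ logRegLoss lam X t v := hmin v
    have hn1 : (0:ℝ) ≤ (1 / (n:ℝ)) := by positivity
    have hJv : logRegLoss lam X t v ≤
        (1 - τ) * logRegLoss lam X t w₀ + τ * logRegLoss lam X t w
          - lam / 2 * (τ * (1 - τ) * S) := by
      unfold logRegLoss
      have h1 := mul_le_mul_of_nonneg_left hsumlog hn1
      rw [hquad]
      ring_nf
      ring_nf at h1
      nlinarith [h1]
    have hτD : τ * (lam / 2 * ((1 - τ) * S)) ≤ τ * D := by
      have : logRegLoss lam X t w₀ ≤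
          (1 - τ) * logRegLoss lam X t w₀ + τ * logRegLoss lam X t w
            - lam / 2 * (τ * (1 - τ) * S) := le_trans hmono hJv
      rw [hD]; nlinarith [this]
    exact le_of_mul_le_mul_left (by linarith [hτD]) hτ0
  -- pass to the limit τ → 0 by contradiction
  by_contra hcon
  push_neg at hcon
  set c : ℝ := lam / 2 * S with hc
  have hDc : D < c := hcon
  have hhalf : c * (1 / 2) ≤ D := by
    have := key (1/2) (by norm_num) (by norm_num)
    nlinarith [this]
  have hcpos : 0 < c := by nlinarith
  have hDpos : 0 < D := by nlinarith
  set τ : ℝ := (c - D) / (2 * c) with hτ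
  have hτ0 : 0 < τ := by
    apply div_pos (by linarith) (by linarith)
  have hτ1 : τ < 1 := by
    rw [hτ, div_lt_one (by linarith)]
    linarith
  have hk := key τ hτ0 hτ1
  have hcne : c ≠ 0 := ne_of_gt hcpos
  have hval : lam / 2 * ((1 - τ) * S) = c * (1 - τ) := by rw [hc]; ring
  have hval2 : c * (1 - τ) = (c + D) / 2 := by
    rw [hτ]; field_simp; ring
  rw [hval, hval2] at hk
  linarith

end Stmt7Aux

open Stmt7Aux in
/-- L1-sensitivity of regularized logistic regression: if `w₁` minimizes
`J(·, D)` and `w₂` minimizes `J(·, D')` for datasets differing in one sample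
(covariates in `[0,1]^d`, labels `±1`), then `‖w₁ - w₂‖₁ ≤ 2d/(nλ)`. -/
theorem stmt7 {n d : ℕ} (hn : 0 < n) (lam : ℝ) (hlam : 0 < lam)
    (X X' : Fin n → Fin d → ℝ) (t t' : Fin n → ℝ)
    (hX : ∀ i j, X i j ∈ Set.Icc (0 : ℝ) 1) (hX' : ∀ i j, X' i j ∈ Set.Icc (0 : ℝ) 1)
    (ht : ∀ i, t i = 1 ∨ t i = -1) (ht' : ∀ i, t' i = 1 ∨ t' i = -1)
    (i₀ : Fin n) (hdiff : ∀ i, i ≠ i₀ → X i = X' i ∧ t i = t' i)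
    (w₁ w₂ : Fin d → ℝ)
    (hmin₁ : ∀ w, logRegLoss lam X t w₁ ≤ logRegLoss lam X t w)
    (hmin₂ : ∀ w, logRegLoss lam X' t' w₂ ≤ logRegLoss lam X' t' w) :
    (∑ j, |w₁ j - w₂ j|) ≤ 2 * d / (n * lam) := by
  have hnR : (0:ℝ) < (n:ℝ) := by exact_mod_cast hn
  set L : ℝ := ∑ j, |w₁ j - w₂ j| with hL
  set S : ℝ := ∑ j, (w₂ j - w₁ j) ^ 2 with hS
  have hLnn : 0 ≤ L := Finset.sum_nonneg fun j _ => abs_nonneg _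
  -- strong convexity at both minimizers
  have hA := strong_min lam hlam X t w₁ w₂ hmin₁
  have hB := strong_min lam hlam X' t' w₂ w₁ hmin₂
  have hSsymm : ∑ j, (w₁ j - w₂ j) ^ 2 = S :=
    Finset.sum_congr rfl fun j _ => by ring
  rw [hSsymm] at hB
  -- difference of the two losses
  have hJdiff : ∀ w, logRegLoss lam X t w - logRegLoss lam X' t' w =
      (1 / n) * (Real.log (1 + Real.exp (-(∑ j, X i₀ j * w j) * t i₀)) -
        Real.log (1 + Real.exp (-(∑ j, X' i₀ j * w j) * t' i₀))) := by
    intro w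
    have hsum : ∑ i, Real.log (1 + Real.exp (-(∑ j, X i j * w j) * t i)) -
        ∑ i, Real.log (1 + Real.exp (-(∑ j, X' i j * w j) * t' i)) =
        Real.log (1 + Real.exp (-(∑ j, X i₀ j * w j) * t i₀)) -
          Real.log (1 + Real.exp (-(∑ j, X' i₀ j * w j) * t' i₀)) := by
      rw [← Finset.sum_sub_distrib]
      rw [Finset.sum_eq_single i₀]
      · intro i _ hi
        obtain ⟨hx, hti⟩ := hdiff i hi
        rw [hx, hti]; ring
      · intro h; exact absurd (Finset.mem_univ i₀) h
    unfold logRegLoss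
    linear_combination (1 / (n:ℝ)) * hsum
  -- Lipschitz bound on the individual-sample terms
  have hlip : ∀ (Y : Fin d → ℝ) (s : ℝ), (∀ j, Y j ∈ Set.Icc (0:ℝ) 1) → (s = 1 ∨ s = -1) →
      ∀ u v : Fin d → ℝ, (∑ j, |u j - v j|) = L →
      Real.log (1 + Real.exp (-(∑ j, Y j * u j) * s)) -
        Real.log (1 + Real.exp (-(∑ j, Y j * v j) * s)) ≤ L := by
    intro Y s hY hs u v huv
    have h1 := lse_sub_le (-(∑ j, Y j * u j) * s) (-(∑ j, Y j * v j) * s)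
    have h2 : |(-(∑ j, Y j * u j) * s) - (-(∑ j, Y j * v j) * s)| ≤ L := by
      have heq : (-(∑ j, Y j * u j) * s) - (-(∑ j, Y j * v j) * s) =
          (∑ j, Y j * (v j - u j)) * s := by
        rw [show ∑ j, Y j * (v j - u j) = (∑ j, Y j * v j) - ∑ j, Y j * u j from by
          rw [← Finset.sum_sub_distrib]; exact Finset.sum_congr rfl fun j _ => by ring]
        ring
      rw [heq, abs_mul]
      have hs1 : |s| = 1 := by rcases hs with h | h <;> simp [h]
      rw [hs1, mul_one]
      calc |∑ j, Y j * (v j - u j)| ≤ ∑ j, |Y j * (v j - u j)| :=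
            Finset.abs_sum_le_sum_abs _ _
        _ ≤ ∑ j, |u j - v j| := by
            apply Finset.sum_le_sum
            intro j _
            rw [abs_mul]
            have := hY j
            have h01 : |Y j| ≤ 1 := by rw [abs_le]; constructor <;> [linarith [this.1]; exact this.2]
            have : |v j - u j| = |u j - v j| := abs_sub_comm _ _
            nlinarith [abs_nonneg (v j - u j), abs_nonneg (u j - v j)]
        _ = L := huv
    calc _ ≤ |(-(∑ j, Y j * u j) * s) - (-(∑ j, Y j * v j) * s)| := by
          simpa [lse] using h1
      _ ≤ L := h2
  -- combine
  rw [← hS] at hA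
  have hmain : lam * S ≤ 2 / n * L := by
    have e1 := hJdiff w₂
    have e2 := hJdiff w₁
    have b1 := hlip (X i₀) (t i₀) (fun j => hX i₀ j) (ht i₀) w₂ w₁
      (by rw [hL]; exact Finset.sum_congr rfl fun j _ => abs_sub_comm _ _)
    have b2 := hlip (X' i₀) (t' i₀) (fun j => hX' i₀ j) (ht' i₀) w₁ w₂ rfl
    have hn1 : (0:ℝ) ≤ 1 / (n:ℝ) := by positivity
    have key : (logRegLoss lam X t w₂ - logRegLoss lam X t w₁) +
        (logRegLoss lam X' t' w₁ - logRegLoss lam X' t' w₂) ≤ 2 / n * L := by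
      rw [show (logRegLoss lam X t w₂ - logRegLoss lam X t w₁) +
          (logRegLoss lam X' t' w₁ - logRegLoss lam X' t' w₂) =
          (logRegLoss lam X t w₂ - logRegLoss lam X' t' w₂) -
            (logRegLoss lam X t w₁ - logRegLoss lam X' t' w₁) from by ring, e1, e2]
      calc (1 / (n:ℝ)) *
            (Real.log (1 + Real.exp (-(∑ j, X i₀ j * w₂ j) * t i₀)) -
              Real.log (1 + Real.exp (-(∑ j, X' i₀ j * w₂ j) * t' i₀))) -
          (1 / (n:ℝ)) *
            (Real.log (1 + Real.exp (-(∑ j, X i₀ j * w₁ j) * t i₀)) -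
              Real.log (1 + Real.exp (-(∑ j, X' i₀ j * w₁ j) * t' i₀)))
          = (1 / (n:ℝ)) *
            ((Real.log (1 + Real.exp (-(∑ j, X i₀ j * w₂ j) * t i₀)) -
              Real.log (1 + Real.exp (-(∑ j, X i₀ j * w₁ j) * t i₀))) +
             (Real.log (1 + Real.exp (-(∑ j, X' i₀ j * w₁ j) * t' i₀)) -
              Real.log (1 + Real.exp (-(∑ j, X' i₀ j * w₂ j) * t' i₀)))) := by ring
        _ ≤ (1 / (n:ℝ)) * (L + L) := mul_le_mul_of_nonneg_left (add_le_add b1 b2) hn1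
        _ = 2 / n * L := by ring
    linarith [hA, hB, key]
  -- Cauchy–Schwarz
  have hCS : L ^ 2 ≤ (d:ℝ) * S := by
    have := sq_sum_le_card_mul_sum_sq (s := Finset.univ) (f := fun j => |w₁ j - w₂ j|)
    simp only [Finset.card_univ, Fintype.card_fin, sq_abs] at this
    calc L ^ 2 ≤ (d:ℝ) * ∑ j, (w₁ j - w₂ j) ^ 2 := by exact_mod_cast this
      _ = (d:ℝ) * S := by rw [hSsymm]
  rcases eq_or_lt_of_le hLnn with h0 | hLpos
  · rw [← h0]; positivity
  · rw [le_div_iff₀ (by positivity : (0:ℝ) < (n:ℝ) * lam)]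
    have h1 : lam * L ^ 2 ≤ lam * ((d:ℝ) * S) := by nlinarith
    have h2 : lam * ((d:ℝ) * S) ≤ (d:ℝ) * (2 / n * L) := by
      have hd : (0:ℝ) ≤ (d:ℝ) := Nat.cast_nonneg d
      nlinarith [hmain]
    have h3 : lam * L ^ 2 ≤ (d:ℝ) * (2 / n * L) := le_trans h1 h2
    have h4 : lam * L * (n:ℝ) ≤ 2 * (d:ℝ) := by
      have := mul_le_mul_of_nonneg_right h3 (le_of_lt hnR)
      have hL' : 0 < L := hLpos
      have expand : (d:ℝ) * (2 / n * L) * n = 2 * d * L := by field_simp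
      rw [expand] at this
      nlinarith [this]
    nlinarith [h4]
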